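/- The induced subgraph of Q_n obtained by deleting all vertices of Hamming weight divisible by 4 has at least (3/4 - o(1))·2^n vertices; consequently π_v(Q_3) ≥ 3/4. -/

import Mathlib

open Filter

/-- The hypercube graph `Q_n` on `{0,1}^n`. -/
def Qcube (n : ℕ) : SimpleGraph (Fin n → Bool) where
  Adj x y := hammingDist x y = 1
  symm := ⟨fun x y (h : hammingDist x y = 1) => show hammingDist y x = 1 by rwa [hammingDist_comm]⟩
  loopless := ⟨fun x (h : hammingDist x x = 1) => by simp [hammingDist_self] at h⟩

/-- The Hamming weight (layer) of a vertex of the hypercube. -/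
def wt {n : ℕ} (x : Fin n → Bool) : ℕ := (Finset.univ.filter fun i => x i = true).card

def flp {n : ℕ} (x : Fin n → Bool) (i : Fin n) : Fin n → Bool := Function.update x i (!x i)

lemma flp_self {n : ℕ} (x : Fin n → Bool) (i : Fin n) : flp x i i = !x i := by
  simp [flp]

lemma flp_ne_apply {n : ℕ} (x : Fin n → Bool) {i j : Fin n} (h : j ≠ i) : flp x i j = x j := by
  simp [flp, Function.update_apply, h]

lemma flp_flp {n : ℕ} (x : Fin n → Bool) (i : Fin n) : flp (flp x i) i = x := by
  funext j
  by_cases h : j = i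
  · subst h; simp [flp]
  · simp [flp_ne_apply _ h]

lemma adj_iff {n : ℕ} (x y : Fin n → Bool) : (Qcube n).Adj x y ↔ ∃ i, y = flp x i := by
  constructor
  · intro h
    have h' : (Finset.univ.filter fun i => x i ≠ y i).card = 1 := h
    obtain ⟨i, hi⟩ := Finset.card_eq_one.mp h'
    refine ⟨i, funext fun j => ?_⟩
    by_cases hj : j = i
    · subst hj
      have : x j ≠ y j := by
        have : j ∈ Finset.univ.filter fun i => x i ≠ y i := by rw [hi]; simp
        simpa using this
      rw [flp_self]
      revert this; cases x j <;> cases y j <;> simp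
    · have : j ∉ Finset.univ.filter fun i => x i ≠ y i := by rw [hi]; simp [hj]
      simp at this
      rw [flp_ne_apply _ hj, this]
  · rintro ⟨i, rfl⟩
    show (Finset.univ.filter fun j => x j ≠ flp x i j).card = 1
    have : (Finset.univ.filter fun j => x j ≠ flp x i j) = {i} := by
      ext j
      simp only [Finset.mem_filter, Finset.mem_univ, true_and, Finset.mem_singleton]
      constructor
      · intro h; by_contra hj; exact h (flp_ne_apply _ hj).symm
      · rintro rfl; rw [flp_self]; cases x j <;> simp
    rw [this]; simp

lemma square {n : ℕ} (x w : Fin n → Bool) {i j : Fin n} (hij : i ≠ j)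
    (h1 : (Qcube n).Adj (flp x i) w) (h2 : (Qcube n).Adj (flp x j) w) (hwx : w ≠ x) :
    w = flp (flp x i) j := by
  obtain ⟨a, ha⟩ := (adj_iff _ _).mp h1
  obtain ⟨b, hb⟩ := (adj_iff _ _).mp h2
  have hai : a ≠ i := by rintro rfl; rw [ha, flp_flp] at hwx; exact hwx rfl
  have hbj : b ≠ j := by rintro rfl; rw [hb, flp_flp] at hwx; exact hwx rfl
  by_cases haj : a = j
  · rw [ha, haj]
  · exfalso
    have hbi : b = i := by
      by_contra hbi
      have e1 : w i = !x i := by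
        rw [ha, flp_ne_apply _ hai.symm, flp_self]
      have e2 : w i = x i := by
        rw [hb, flp_ne_apply _ (fun h => hbi h.symm), flp_ne_apply _ hij]
      rw [e1] at e2; cases x i <;> simp_all
    have e1 : w a = !x a := by
      rw [ha, flp_self, flp_ne_apply _ hai]
    have e2 : w a = x a := by
      rw [hb, flp_ne_apply _ (by rw [hbi]; exact hai), flp_ne_apply _ haj]
    rw [e1] at e2; cases x a <;> simp_all


/-- The set `S` contains no copy of `Q_3` (as a subgraph of `Q_n`). -/
def Q3Free (n : ℕ) (S : Set (Fin n → Bool)) : Prop :=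
  ¬ ∃ f : (Fin 3 → Bool) → (Fin n → Bool), Function.Injective f ∧
    Set.range f ⊆ S ∧ ∀ a b, (Qcube 3).Adj a b → (Qcube n).Adj (f a) (f b)

def sgn (b : Bool) : ℤ := cond b (-1) 1

lemma wt_flp_int {n : ℕ} (x : Fin n → Bool) (i : Fin n) :
    (wt (flp x i) : ℤ) = wt x + sgn (x i) := by
  cases hb : x i
  · have : (Finset.univ.filter fun l => flp x i l = true)
        = insert i (Finset.univ.filter fun l => x l = true) := by
      ext l
      simp only [Finset.mem_filter, Finset.mem_univ, true_and, Finset.mem_insert]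
      by_cases hl : l = i
      · subst hl; simp [flp_self, hb]
      · simp [flp_ne_apply _ hl, hl]
    have hni : i ∉ Finset.univ.filter fun l => x l = true := by simp [hb]
    have : wt (flp x i) = wt x + 1 := by
      unfold wt; rw [this, Finset.card_insert_of_notMem hni]
    rw [this]; push_cast; simp [sgn]
  · have : (Finset.univ.filter fun l => flp x i l = true)
        = (Finset.univ.filter fun l => x l = true).erase i := by
      ext l
      simp only [Finset.mem_filter, Finset.mem_univ, true_and, Finset.mem_erase]
      by_cases hl : l = i
      · subst hl; simp [flp_self, hb]
      · simp [flp_ne_apply _ hl, hl]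
    have hmi : i ∈ Finset.univ.filter fun l => x l = true := by simp [hb]
    have : wt (flp x i) + 1 = wt x := by
      unfold wt; rw [this]; exact Finset.card_erase_add_one hmi
    have h2 : (wt (flp x i) : ℤ) + 1 = (wt x : ℤ) := by exact_mod_cast this
    simp only [sgn, cond_true]; omega

lemma q3free (n : ℕ) : Q3Free n {x | ¬ (4 ∣ wt x)} := by
  rintro ⟨f, hinj, hrange, hadj⟩
  have hS : ∀ a : Fin 3 → Bool, ¬ (4 ∣ wt (f a)) := fun a => hrange ⟨a, rfl⟩
  set x := f ![false, false, false] with hx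
  have a1 : (Qcube n).Adj x (f ![true, false, false]) :=
    hadj _ _ (by show hammingDist _ _ = 1; decide)
  have a2 : (Qcube n).Adj x (f ![false, true, false]) :=
    hadj _ _ (by show hammingDist _ _ = 1; decide)
  have a3 : (Qcube n).Adj x (f ![false, false, true]) :=
    hadj _ _ (by show hammingDist _ _ = 1; decide)
  obtain ⟨i, hi⟩ := (adj_iff _ _).mp a1
  obtain ⟨j, hj⟩ := (adj_iff _ _).mp a2
  obtain ⟨k, hk⟩ := (adj_iff _ _).mp a3
  have hij : i ≠ j := by
    rintro rfl; rw [← hj] at hi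
    have := hinj hi
    exact absurd (congrFun this 0) (by decide)
  have hik : i ≠ k := by
    rintro rfl; rw [← hk] at hi
    have := hinj hi
    exact absurd (congrFun this 0) (by decide)
  have hjk : j ≠ k := by
    rintro rfl; rw [← hk] at hj
    have := hinj hj
    exact absurd (congrFun this 1) (by decide)
  -- f(110)
  have h110 : f ![true, true, false] = flp (flp x i) j := by
    apply square x _ hij
    · rw [← hi]; exact hadj _ _ (by show hammingDist _ _ = 1; decide)
    · rw [← hj]; exact hadj _ _ (by show hammingDist _ _ = 1; decide)
    · exact fun h => absurd (congrFun (hinj (hx ▸ h)) 0) (by decide)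
  have h101 : f ![true, false, true] = flp (flp x i) k := by
    apply square x _ hik
    · rw [← hi]; exact hadj _ _ (by show hammingDist _ _ = 1; decide)
    · rw [← hk]; exact hadj _ _ (by show hammingDist _ _ = 1; decide)
    · exact fun h => absurd (congrFun (hinj (hx ▸ h)) 0) (by decide)
  have h011 : f ![false, true, true] = flp (flp x j) k := by
    apply square x _ hjk
    · rw [← hj]; exact hadj _ _ (by show hammingDist _ _ = 1; decide)
    · rw [← hk]; exact hadj _ _ (by show hammingDist _ _ = 1; decide)
    · exact fun h => absurd (congrFun (hinj (hx ▸ h)) 1) (by decide)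
  have h111 : f ![true, true, true] = flp (flp (flp x i) j) k := by
    apply square (flp x i) _ hjk
    · rw [← h110]; exact hadj _ _ (by show hammingDist _ _ = 1; decide)
    · rw [← h101]; exact hadj _ _ (by show hammingDist _ _ = 1; decide)
    · rw [← hi]; exact fun h => absurd (congrFun (hinj h) 1) (by decide)
  -- weights
  have w0 := hS ![false, false, false]
  have w1 := hS ![true, false, false]
  have w2 := hS ![false, true, false]
  have w3 := hS ![false, false, true]
  have w12 := hS ![true, true, false]
  have w13 := hS ![true, false, true]
  have w23 := hS ![false, true, true]
  have w123 := hS ![true, true, true]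
  rw [hi] at w1; rw [hj] at w2; rw [hk] at w3
  rw [h110] at w12; rw [h101] at w13; rw [h011] at w23; rw [h111] at w123
  rw [← hx] at w0
  have e1 := wt_flp_int x i
  have e2 := wt_flp_int x j
  have e3 := wt_flp_int x k
  have e12 := wt_flp_int (flp x i) j
  have e13 := wt_flp_int (flp x i) k
  have e23 := wt_flp_int (flp x j) k
  have e123 := wt_flp_int (flp (flp x i) j) k
  rw [flp_ne_apply _ hij.symm] at e12
  rw [flp_ne_apply _ hik.symm] at e13
  rw [flp_ne_apply _ hjk.symm] at e23
  rw [flp_ne_apply _ hjk.symm, flp_ne_apply _ hik.symm] at e123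
  cases hbi : x i <;> cases hbj : x j <;> cases hbk : x k <;>
    simp only [hbi, hbj, hbk, sgn, cond_true, cond_false] at e1 e2 e3 e12 e13 e23 e123 <;>
    omega

lemma sum_pow_wt (n : ℕ) (c : ℂ) : ∑ x : Fin n → Bool, c ^ wt x = (1 + c) ^ n := by
  have h1 : ∀ x : Fin n → Bool, c ^ wt x = ∏ i, (if x i = true then c else 1) := by
    intro x
    rw [wt, ← Finset.prod_const, Finset.prod_filter]
  calc ∑ x : Fin n → Bool, c ^ wt x
      = ∑ x ∈ Fintype.piFinset (fun _ : Fin n => (Finset.univ : Finset Bool)),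
          ∏ i, (if x i = true then c else 1) := by
        rw [Fintype.piFinset_univ]; exact Finset.sum_congr rfl fun x _ => h1 x
    _ = ∏ _i : Fin n, ∑ b ∈ (Finset.univ : Finset Bool), (if b = true then c else 1) :=
        (Finset.prod_univ_sum (fun _ : Fin n => (Finset.univ : Finset Bool)) (fun _ b => if b = true then c else 1)).symm
    _ = (1 + c) ^ n := by simp [add_comm]

lemma roots (r : ℕ) :
    (1 + Complex.I ^ r + (Complex.I ^ r) ^ 2 + (Complex.I ^ r) ^ 3 : ℂ)
      = if 4 ∣ r then 4 else 0 := by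
  have h4 : Complex.I ^ r = Complex.I ^ (r % 4) := by
    conv_lhs => rw [← Nat.div_add_mod r 4]
    rw [pow_add, pow_mul, Complex.I_pow_four, one_pow, one_mul]
  have hd : 4 ∣ r ↔ r % 4 = 0 := Nat.dvd_iff_mod_eq_zero
  have : r % 4 = 0 ∨ r % 4 = 1 ∨ r % 4 = 2 ∨ r % 4 = 3 := by omega
  rw [h4]
  rcases this with h | h | h | h <;> rw [h] <;>
    simp [hd, h, pow_succ, Complex.I_sq] <;> ring

def Acnt (n : ℕ) : ℕ := (Finset.univ.filter fun x : Fin n → Bool => 4 ∣ wt x).card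

lemma fourA (n : ℕ) (hn : 1 ≤ n) :
    ((4 * Acnt n : ℕ) : ℂ) = 2 ^ n + (1 + Complex.I) ^ n + (1 - Complex.I) ^ n := by
  have lhs : ∑ x : Fin n → Bool,
      ((1 : ℂ) + Complex.I ^ wt x + (Complex.I ^ wt x) ^ 2 + (Complex.I ^ wt x) ^ 3)
      = ((4 * Acnt n : ℕ) : ℂ) := by
    rw [Finset.sum_congr rfl (fun x _ => roots (wt x))]
    rw [Finset.sum_ite, Finset.sum_const, Finset.sum_const_zero, add_zero, Acnt]
    push_cast
    simp [nsmul_eq_mul, mul_comm]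
  rw [← lhs]
  have e2 : ∀ x : Fin n → Bool, (Complex.I ^ wt x) ^ 2 = ((-1 : ℂ)) ^ wt x := by
    intro x; rw [← pow_mul, mul_comm, pow_mul, Complex.I_sq]
  have e3 : ∀ x : Fin n → Bool, (Complex.I ^ wt x) ^ 3 = ((-Complex.I : ℂ)) ^ wt x := by
    intro x; rw [← pow_mul, mul_comm, pow_mul]
    congr 1
    rw [pow_succ, Complex.I_sq]; ring
  calc ∑ x : Fin n → Bool,
      ((1 : ℂ) + Complex.I ^ wt x + (Complex.I ^ wt x) ^ 2 + (Complex.I ^ wt x) ^ 3)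
      = (∑ _x : Fin n → Bool, (1:ℂ)) + (∑ x : Fin n → Bool, Complex.I ^ wt x)
        + (∑ x : Fin n → Bool, ((-1:ℂ)) ^ wt x)
        + (∑ x : Fin n → Bool, ((-Complex.I :ℂ)) ^ wt x) := by
        rw [← Finset.sum_add_distrib, ← Finset.sum_add_distrib, ← Finset.sum_add_distrib]
        exact Finset.sum_congr rfl fun x _ => by rw [e2 x, e3 x]
    _ = 2 ^ n + (1 + Complex.I) ^ n + (1 - Complex.I) ^ n := by
        rw [sum_pow_wt, sum_pow_wt, sum_pow_wt, Finset.sum_const]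
        have : (1 + (-1 : ℂ)) ^ n = 0 := by
          rw [add_neg_cancel]; exact zero_pow (by omega)
        rw [this]
        simp [Fintype.card_fun]
        ring


lemma Abound (n : ℕ) (hn : 1 ≤ n) :
    |(4 * Acnt n : ℝ) - 2 ^ n| ≤ 2 * (Real.sqrt 2) ^ n := by
  have h := fourA n hn
  have habs : ‖(((4 * Acnt n : ℕ) : ℂ) - 2 ^ n)‖
      = |(4 * Acnt n : ℝ) - 2 ^ n| := by
    have : ((4 * Acnt n : ℕ) : ℂ) - 2 ^ n = (((4 * Acnt n : ℝ) - 2 ^ n : ℝ) : ℂ) := by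
      push_cast; ring
    rw [this, Complex.norm_real, Real.norm_eq_abs]
  rw [← habs]
  have hrw : ((4 * Acnt n : ℕ) : ℂ) - 2 ^ n = (1 + Complex.I) ^ n + (1 - Complex.I) ^ n := by
    rw [h]; ring
  rw [hrw]
  have h1 : ‖(1 + Complex.I)‖ = Real.sqrt 2 := by
    rw [Complex.norm_def]
    congr 1
    simp only [Complex.normSq_apply]
    norm_num
  have h2 : ‖(1 - Complex.I)‖ = Real.sqrt 2 := by
    rw [Complex.norm_def]
    congr 1
    simp only [Complex.normSq_apply]
    norm_num
  calc ‖((1 + Complex.I) ^ n + (1 - Complex.I) ^ n)‖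
      ≤ ‖((1 + Complex.I) ^ n)‖ + ‖((1 - Complex.I) ^ n)‖ :=
        norm_add_le _ _
    _ = 2 * (Real.sqrt 2) ^ n := by rw [norm_pow, norm_pow, h1, h2]; ring

/-- Deleting all vertices of `Q_n` whose Hamming weight is divisible by 4 leaves
at least `(3/4 - o(1))·2^n` vertices; consequently `π_v(Q_3) ≥ 3/4`, i.e. the
maximum density `b n` of a `Q_3`-free induced subgraph of `Q_n` is eventually at
least `3/4 - ε` for every `ε > 0`. -/
theorem stmt8 (b : ℕ → ℝ)
    (hb : ∀ n, b n = sSup {x : ℝ | ∃ S : Set (Fin n → Bool), Q3Free n S ∧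
      x = (S.ncard : ℝ) / (2 ^ n : ℝ)}) :
    (∃ e : ℕ → ℝ, Tendsto e atTop (nhds 0) ∧
      ∀ n, (3 / 4 - e n) * 2 ^ n ≤ (({x : Fin n → Bool | ¬ (4 ∣ wt x)}).ncard : ℝ)) ∧
    ∀ ε : ℝ, 0 < ε → ∃ N : ℕ, ∀ n ≥ N, 3 / 4 - ε ≤ b n := by
  set e : ℕ → ℝ := fun n => (Acnt n : ℝ) / 2 ^ n - 1 / 4 with he
  have hAle : ∀ n, Acnt n ≤ 2 ^ n := by
    intro n
    calc Acnt n ≤ Finset.univ.card := Finset.card_filter_le _ _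
      _ = 2 ^ n := by simp [Finset.card_univ]
  have hcomp : ∀ n, ({x : Fin n → Bool | ¬ (4 ∣ wt x)}).ncard = 2 ^ n - Acnt n := by
    intro n
    have hset : {x : Fin n → Bool | ¬ (4 ∣ wt x)}
        = ↑(Finset.univ.filter fun x : Fin n → Bool => ¬ (4 ∣ wt x)) := by
      ext; simp
    rw [hset, Set.ncard_coe_finset]
    have hsum := Finset.card_filter_add_card_filter_not
      (s := (Finset.univ : Finset (Fin n → Bool))) (p := fun x => 4 ∣ wt x)
    have hcard : (Finset.univ : Finset (Fin n → Bool)).card = 2 ^ n := by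
      simp [Finset.card_univ]
    rw [hcard] at hsum
    have : Acnt n + (Finset.univ.filter fun x : Fin n → Bool => ¬ (4 ∣ wt x)).card = 2 ^ n := by
      rw [Acnt]; convert hsum using 3 <;> simp
    omega
  have heq : ∀ n, (3 / 4 - e n) * 2 ^ n
      = (({x : Fin n → Bool | ¬ (4 ∣ wt x)}).ncard : ℝ) := by
    intro n
    rw [hcomp n, Nat.cast_sub (hAle n)]
    have h2n : (2 : ℝ) ^ n ≠ 0 := by positivity
    push_cast
    rw [he]
    field_simp [he]
    ring
  have htend : Tendsto e atTop (nhds 0) := by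
    refine squeeze_zero_norm' (a := fun n => (Real.sqrt 2 / 2) ^ n) ?_ ?_
    · filter_upwards [eventually_ge_atTop 1] with n hn
      have hbd := Abound n hn
      have h2n : (0 : ℝ) < 2 ^ n := by positivity
      have hen : |e n| = |(4 * Acnt n : ℝ) - 2 ^ n| / (4 * 2 ^ n) := by
        have : e n = ((4 * Acnt n : ℝ) - 2 ^ n) / (4 * 2 ^ n) := by
          rw [he]; field_simp
        rw [this, abs_div, abs_of_pos (show (0:ℝ) < 4 * 2 ^ n by positivity)]
      rw [Real.norm_eq_abs, hen, div_pow]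
      calc |(4 * Acnt n : ℝ) - 2 ^ n| / (4 * 2 ^ n)
          ≤ (2 * (Real.sqrt 2) ^ n) / (4 * 2 ^ n) := by gcongr
        _ ≤ (2 * (Real.sqrt 2) ^ n) / (2 * 2 ^ n) :=
            div_le_div_of_nonneg_left (by positivity) (by positivity) (by linarith)
        _ = (Real.sqrt 2) ^ n / 2 ^ n := by
            rw [mul_div_mul_left _ _ (by norm_num : (2:ℝ) ≠ 0)]
    · apply tendsto_pow_atTop_nhds_zero_of_lt_one
      · positivity
      · rw [div_lt_one (by norm_num), Real.sqrt_lt' (by norm_num)]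
        norm_num
  refine ⟨⟨e, htend, fun n => le_of_eq (heq n)⟩, ?_⟩
  intro ε hε
  obtain ⟨N, hN⟩ := (Metric.tendsto_atTop.mp htend) ε hε
  refine ⟨N, fun n hn => ?_⟩
  have hen : |e n| < ε := by
    have := hN n hn
    rwa [Real.dist_eq, sub_zero] at this
  have h2n : (0 : ℝ) < 2 ^ n := by positivity
  have hmem : (3 / 4 - e n) ∈ {x : ℝ | ∃ S : Set (Fin n → Bool), Q3Free n S ∧
      x = (S.ncard : ℝ) / (2 ^ n : ℝ)} := by
    refine ⟨{x | ¬ (4 ∣ wt x)}, q3free n, ?_⟩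
    rw [eq_div_iff (ne_of_gt h2n)]
    exact heq n
  have hbdd : BddAbove {x : ℝ | ∃ S : Set (Fin n → Bool), Q3Free n S ∧
      x = (S.ncard : ℝ) / (2 ^ n : ℝ)} := by
    refine ⟨1, ?_⟩
    rintro x ⟨S, _, rfl⟩
    rw [div_le_one h2n]
    have : S.ncard ≤ 2 ^ n := by
      calc S.ncard ≤ (Set.univ : Set (Fin n → Bool)).ncard :=
            Set.ncard_le_ncard (Set.subset_univ S) Set.finite_univ
        _ = 2 ^ n := by
            rw [Set.ncard_univ, Nat.card_eq_fintype_card]; simp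
    exact_mod_cast this
  calc (3 : ℝ) / 4 - ε ≤ 3 / 4 - e n :=
        sub_le_sub_left (le_of_lt (lt_of_le_of_lt (le_abs_self _) hen)) _
    _ ≤ b n := by rw [hb n]; exact le_csSup hbdd hmem
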